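/- Let H be a real inner product space whose elements are functions X → ℝ with reproducing kernel k (i.e. k(·,x) ∈ H and ⟨k(·,x),f⟩_H = f(x) for all f, x). Let x₁,…,x_{n+m} ∈ X, let L be a symmetric positive semidefinite (n+m)×(n+m) matrix, μ > 0, K the Gram matrix K_{ij} = k(xᵢ,xⱼ), assume μ⁻¹I + LK is invertible, and equip H with the modified inner product ⟨f,g⟩_H̃ = ⟨f,g⟩_H + μ·f_Uᵀ L g_U where f_U = (f(x₁),…,f(x_{n+m}))ᵀ. Let H̃_r = {f ∈ H : ⟨f,f⟩_H̃ ≤ r²} for r > 0. Then the empirical Rademacher complexity on the first n points satisfies (1/n)·E_σ[ sup over f ∈ H̃_r of Σᵢ₌₁ⁿ σᵢ·f(xᵢ) ] ≤ (r/n)·√( Σᵢ₌₁ⁿ [ k(xᵢ,xᵢ) − k_{xᵢ}ᵀ (μ⁻¹I + LK)⁻¹ L k_{xᵢ} ] ), where k_x = (k(x₁,x),…,k(x_{n+m},x))ᵀ and E_σ denotes the expectation over σ = (σ₁,…,σ_n) i.i.d. uniform on {−1,+1} (equivalently the average over all 2ⁿ sign vectors). -/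

import Mathlib

open Matrix
open scoped RealInnerProductSpace

/-- Upper bound on the empirical Rademacher complexity of the manifold-regularized ball
`H̃_r = {f | ⟨f,f⟩ + μ f_Uᵀ L f_U ≤ r²}`, measured on the first `n` of the `n + m` points:
`Rad_n(H̃_r) ≤ (r/n) √(Σᵢ₌₁ⁿ [k(xᵢ,xᵢ) - k_{xᵢ}ᵀ (μ⁻¹ I + L K)⁻¹ L k_{xᵢ}])`. -/
theorem stmt16 {H X : Type*} [NormedAddCommGroup H] [InnerProductSpace ℝ H]
    (ev : H →ₗ[ℝ] X → ℝ) (hev : Function.Injective ev)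
    (k : X → X → ℝ) (Krep : X → H)
    (hmem : ∀ y, ev (Krep y) = fun z => k z y)
    (hrep : ∀ (y : X) (f : H), ⟪Krep y, f⟫ = ev f y)
    (n m : ℕ) (hn : 0 < n) (x : Fin (n + m) → X)
    (L : Matrix (Fin (n + m)) (Fin (n + m)) ℝ) (hL : L.PosSemidef)
    (μ : ℝ) (hμ : 0 < μ)
    (K : Matrix (Fin (n + m)) (Fin (n + m)) ℝ) (hK : ∀ i j, K i j = k (x i) (x j))
    (M : Matrix (Fin (n + m)) (Fin (n + m)) ℝ)
    (hM : M = μ⁻¹ • (1 : Matrix (Fin (n + m)) (Fin (n + m)) ℝ) + L * K)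
    (hMinv : IsUnit M)
    (fU : H → Fin (n + m) → ℝ) (hfU : ∀ f i, fU f i = ev f (x i))
    (kvec : X → Fin (n + m) → ℝ) (hkvec : ∀ y i, kvec y i = k (x i) y)
    (r : ℝ) (hr : 0 < r) :
    (1 / n : ℝ) * ((1 / 2 ^ n : ℝ) * ∑ s : Fin n → Bool,
        sSup {v : ℝ | ∃ f : H, ⟪f, f⟫ + μ * (fU f ⬝ᵥ L *ᵥ fU f) ≤ r ^ 2 ∧
          v = ∑ i : Fin n, (if s i then (1 : ℝ) else -1) * ev f (x (Fin.castAdd m i))}) ≤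
      (r / n) * Real.sqrt (∑ i : Fin n,
        (k (x (Fin.castAdd m i)) (x (Fin.castAdd m i)) -
          kvec (x (Fin.castAdd m i)) ⬝ᵥ M⁻¹ *ᵥ (L *ᵥ kvec (x (Fin.castAdd m i))))) := by
  classical
  set y : Fin n → X := fun i => x (Fin.castAdd m i) with hy
  -- symmetry of the kernel
  have ksymm : ∀ a b : X, k a b = k b a := by
    intro a b
    have h1 : k a b = ev (Krep b) a := by rw [hmem]
    have h2 : k b a = ev (Krep a) b := by rw [hmem]
    rw [h1, h2, ← hrep, ← hrep, real_inner_comm]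
  -- coefficient vectors and modified kernel representers
  set c : Fin n → Fin (n + m) → ℝ := fun i => M⁻¹ *ᵥ (L *ᵥ kvec (y i)) with hc
  set Kt : Fin n → H := fun i => Krep (y i) - ∑ j, c i j • Krep (x j) with hKt
  -- the modified bilinear form
  set B : H → H → ℝ := fun f g => ⟪f, g⟫ + μ * (fU f ⬝ᵥ L *ᵥ fU g) with hB
  -- linearity of fU
  have fU_add : ∀ f g : H, fU (f + g) = fU f + fU g := by
    intro f g; funext i
    rw [Pi.add_apply, hfU, hfU, hfU, map_add, Pi.add_apply]
  have fU_smul : ∀ (a : ℝ) (f : H), fU (a • f) = a • fU f := by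
    intro a f; funext i
    rw [Pi.smul_apply, hfU, hfU, ev.map_smul, Pi.smul_apply]
  have fU_zero : fU 0 = 0 := by
    funext i; rw [hfU, map_zero]; rfl
  -- symmetry of L-quadratic form
  have hLt : Lᵀ = L := hL.1
  have L_symm_dot : ∀ u v : Fin (n + m) → ℝ, u ⬝ᵥ L *ᵥ v = v ⬝ᵥ L *ᵥ u := by
    intro u v
    rw [dotProduct_mulVec, ← mulVec_transpose, hLt, dotProduct_comm]
  -- basic properties of B
  have B_symm : ∀ f g : H, B f g = B g f := by
    intro f g
    simp only [hB]
    rw [real_inner_comm, L_symm_dot]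
  have B_nonneg : ∀ f : H, 0 ≤ B f f := by
    intro f
    have h1 : (0:ℝ) ≤ fU f ⬝ᵥ L *ᵥ fU f := by simpa using hL.dotProduct_mulVec_nonneg (fU f)
    have h2 : (0:ℝ) ≤ ⟪f, f⟫ := real_inner_self_nonneg
    simp only [hB]
    nlinarith
  have B_add_left : ∀ f g h : H, B (f + g) h = B f h + B g h := by
    intro f g h
    simp only [hB]
    rw [fU_add, inner_add_left, add_dotProduct]
    ring
  have B_smul_left : ∀ (a : ℝ) (f h : H), B (a • f) h = a * B f h := by
    intro a f h
    simp only [hB]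
    rw [fU_smul, real_inner_smul_left, smul_dotProduct, smul_eq_mul]
    ring
  have B_zero_left : ∀ h : H, B 0 h = 0 := by
    intro h
    simp only [hB]
    rw [fU_zero, inner_zero_left, zero_dotProduct]
    ring
  have B_add_right : ∀ f g h : H, B f (g + h) = B f g + B f h := by
    intro f g h; rw [B_symm, B_add_left, B_symm g f, B_symm h f]
  have B_smul_right : ∀ (a : ℝ) (f h : H), B f (a • h) = a * B f h := by
    intro a f h; rw [B_symm, B_smul_left, B_symm h f]
  have B_sum_left : ∀ (a : Fin n → ℝ) (g : Fin n → H) (f : H),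
      B (∑ i, a i • g i) f = ∑ i, a i * B (g i) f := by
    intro a g f
    induction (Finset.univ : Finset (Fin n)) using Finset.induction with
    | empty => simpa using B_zero_left f
    | insert _ _ h ih =>
      rw [Finset.sum_insert h, Finset.sum_insert h, B_add_left, B_smul_left, ih]
  -- expansion of the quadratic form
  have expand : ∀ (a b : ℝ) (f g : H),
      B (a • f + b • g) (a • f + b • g)
        = a ^ 2 * B f f + 2 * a * b * B f g + b ^ 2 * B g g := by
    intro a b f g
    rw [B_add_left, B_smul_left, B_smul_left, B_add_right, B_add_right, B_smul_right,
      B_smul_right, B_smul_right, B_smul_right, B_symm g f]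
    ring
  -- Cauchy–Schwarz for B
  have B_cs : ∀ f g : H, (B f g) ^ 2 ≤ B f f * B g g := by
    intro f g
    rcases eq_or_lt_of_le (B_nonneg g) with h0 | hpos
    · have hfg : B f g = 0 := by
        by_contra hne
        have ht := B_nonneg ((1 : ℝ) • f + (-(B f f + 1) / (2 * B f g)) • g)
        rw [expand, ← h0] at ht
        have h2 : 2 * (1:ℝ) * (-(B f f + 1) / (2 * B f g)) * B f g = -(B f f + 1) := by
          field_simp
        nlinarith
      rw [hfg, ← h0]
      norm_num
    · have h := B_nonneg ((B g g) • f + (-(B f g)) • g)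
      rw [expand] at h
      nlinarith
  -- the key identity defining c
  have c_eq : ∀ i, μ • (L *ᵥ (kvec (y i) - K *ᵥ c i)) = c i := by
    intro i
    have hdet : IsUnit M.det := (Matrix.isUnit_iff_isUnit_det M).mp hMinv
    have hMc : M *ᵥ c i = L *ᵥ kvec (y i) := by
      show M *ᵥ (M⁻¹ *ᵥ (L *ᵥ kvec (y i))) = L *ᵥ kvec (y i)
      rw [Matrix.mulVec_mulVec, Matrix.mul_nonsing_inv M hdet, Matrix.one_mulVec]
    rw [hM, Matrix.add_mulVec, Matrix.smul_mulVec, Matrix.one_mulVec,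
      ← Matrix.mulVec_mulVec] at hMc
    rw [Matrix.mulVec_sub]
    have : L *ᵥ kvec (y i) - L *ᵥ (K *ᵥ c i) = μ⁻¹ • c i := by
      rw [← hMc]; abel
    rw [this, smul_smul, mul_inv_cancel₀ hμ.ne', one_smul]
  -- fU of the modified representers
  have fU_Kt : ∀ i, fU (Kt i) = kvec (y i) - K *ᵥ c i := by
    intro i
    funext p
    rw [hfU]
    show ev (Krep (y i) - ∑ j, c i j • Krep (x j)) (x p) = _
    simp only [map_sub, map_sum, _root_.map_smul, Pi.sub_apply, Finset.sum_apply,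
      Pi.smul_apply, smul_eq_mul, hmem]
    -- ⊢ k (x p) (y i) - ∑ j, c i j * k (x p) (x j) = (kvec (y i) - K *ᵥ c i) p
    have h2 : (K *ᵥ c i) p = ∑ j, K p j * c i j := rfl
    rw [h2, hkvec]
    congr 1
    apply Finset.sum_congr rfl
    intro j _
    rw [hK]
    ring
  -- the reproducing property of Kt for B
  have hrep' : ∀ (i : Fin n) (f : H), B (Kt i) f = ev f (y i) := by
    intro i f
    have h1 : ⟪Kt i, f⟫ = ev f (y i) - c i ⬝ᵥ fU f := by
      show ⟪Krep (y i) - ∑ j, c i j • Krep (x j), f⟫ = _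
      rw [inner_sub_left, hrep, sum_inner]
      congr 1
      simp only [real_inner_smul_left, hrep]
      simp [dotProduct, hfU]
    show ⟪Kt i, f⟫ + μ * (fU (Kt i) ⬝ᵥ L *ᵥ fU f) = ev f (y i)
    rw [h1, fU_Kt]
    have h2 : (kvec (y i) - K *ᵥ c i) ⬝ᵥ (L *ᵥ fU f)
        = (L *ᵥ (kvec (y i) - K *ᵥ c i)) ⬝ᵥ fU f := by
      rw [L_symm_dot]
      exact dotProduct_comm _ _
    rw [h2]
    have h3 : μ * ((L *ᵥ (kvec (y i) - K *ᵥ c i)) ⬝ᵥ fU f) = c i ⬝ᵥ fU f := by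
      rw [← smul_eq_mul, ← smul_dotProduct, c_eq i]
    rw [h3]
    ring
  -- diagonal values of the modified kernel
  have diag : ∀ i : Fin n,
      B (Kt i) (Kt i) = k (y i) (y i) - kvec (y i) ⬝ᵥ M⁻¹ *ᵥ (L *ᵥ kvec (y i)) := by
    intro i
    rw [hrep' i (Kt i)]
    show ev (Krep (y i) - ∑ j, c i j • Krep (x j)) (y i) = _
    simp only [map_sub, map_sum, _root_.map_smul, Pi.sub_apply, Finset.sum_apply,
      Pi.smul_apply, smul_eq_mul, hmem]
    -- ⊢ k (y i) (y i) - ∑ j, c i j * k (y i) (x j) = _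
    have h2 : kvec (y i) ⬝ᵥ M⁻¹ *ᵥ (L *ᵥ kvec (y i)) = ∑ j, kvec (y i) j * c i j := rfl
    rw [h2]
    congr 1
    apply Finset.sum_congr rfl
    intro j _
    rw [hkvec, ksymm (y i) (x j)]
    ring
  -- sign vectors
  set σ : (Fin n → Bool) → Fin n → ℝ := fun s i => if s i then 1 else -1 with hσ
  set g : (Fin n → Bool) → H := fun s => ∑ i, σ s i • Kt i with hg
  -- the total complexity
  set S : ℝ := ∑ i : Fin n, (k (y i) (y i) - kvec (y i) ⬝ᵥ M⁻¹ *ᵥ (L *ᵥ kvec (y i))) with hS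
  have hS_nonneg : 0 ≤ S := by
    rw [hS]
    apply Finset.sum_nonneg
    intro i _
    rw [← diag i]
    exact B_nonneg _
  -- per-sign supremum bound
  have step1 : ∀ s : Fin n → Bool,
      sSup {v : ℝ | ∃ f : H, ⟪f, f⟫ + μ * (fU f ⬝ᵥ L *ᵥ fU f) ≤ r ^ 2 ∧
          v = ∑ i : Fin n, (if s i then (1 : ℝ) else -1) * ev f (y i)}
        ≤ r * Real.sqrt (B (g s) (g s)) := by
    intro s
    apply Real.sSup_le
    · rintro v ⟨f, hf, rfl⟩
      have hBff : B f f ≤ r ^ 2 := hf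
      have hv : (∑ i : Fin n, (if s i then (1 : ℝ) else -1) * ev f (y i)) = B (g s) f := by
        rw [hg]
        simp only
        rw [B_sum_left]
        exact Finset.sum_congr rfl fun i _ => by rw [hrep' i f]
      rw [hv]
      have h2 : (B (g s) f) ^ 2 ≤ B (g s) (g s) * r ^ 2 := by
        calc (B (g s) f) ^ 2 ≤ B (g s) (g s) * B f f := B_cs _ _
          _ ≤ B (g s) (g s) * r ^ 2 :=
            mul_le_mul_of_nonneg_left hBff (B_nonneg _)
      calc B (g s) f ≤ |B (g s) f| := le_abs_self _
        _ = Real.sqrt ((B (g s) f) ^ 2) := (Real.sqrt_sq_eq_abs _).symm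
        _ ≤ Real.sqrt (B (g s) (g s) * r ^ 2) := Real.sqrt_le_sqrt h2
        _ = r * Real.sqrt (B (g s) (g s)) := by
            rw [Real.sqrt_mul (B_nonneg _), Real.sqrt_sq hr.le]; ring
    · positivity
  -- orthogonality of signs
  have sigma_sum : ∀ i j : Fin n,
      (∑ s : Fin n → Bool, σ s i * σ s j) = if i = j then (2 : ℝ) ^ n else 0 := by
    intro i j
    by_cases hij : i = j
    · subst hij
      rw [if_pos rfl]
      have h1 : ∀ s : Fin n → Bool, σ s i * σ s i = 1 := by
        intro s
        simp only [hσ]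
        by_cases h : s i <;> simp [h]
      rw [Finset.sum_congr rfl fun s _ => h1 s]
      simp [Finset.card_univ]
    · rw [if_neg hij]
      apply Finset.sum_ninvolution (g := fun s => Function.update s i (!(s i)))
      · intro s
        have hgi : Function.update s i (!(s i)) i = !(s i) := Function.update_self _ _ _
        have hgj : Function.update s i (!(s i)) j = s j := Function.update_of_ne (Ne.symm hij) _ _
        simp only [hσ, hgi, hgj]
        by_cases h1 : s i <;> by_cases h2 : s j <;> simp [h1, h2]
      · intro s _
        intro hcontra
        have := congrFun hcontra i
        rw [Function.update_self] at this
        exact (Bool.not_ne_self (s i)) this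
      · intro s; exact Finset.mem_univ _
      · intro s
        funext p
        by_cases hp : p = i
        · subst hp
          simp [Function.update_self]
        · rw [Function.update_of_ne hp, Function.update_of_ne hp]
  -- total of the quadratic forms over all sign vectors
  have sum_Q : (∑ s : Fin n → Bool, B (g s) (g s)) = 2 ^ n * S := by
    have hgs : ∀ s, B (g s) (g s) = ∑ i, ∑ j, σ s i * σ s j * B (Kt i) (Kt j) := by
      intro s
      rw [hg]
      simp only
      rw [B_sum_left]
      apply Finset.sum_congr rfl
      intro i _
      rw [B_symm (Kt i), B_sum_left, Finset.mul_sum]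
      apply Finset.sum_congr rfl
      intro j _
      rw [B_symm (Kt j)]
      ring
    rw [Finset.sum_congr rfl fun s _ => hgs s]
    rw [Finset.sum_comm]
    have h1 : ∀ i : Fin n, (∑ s : Fin n → Bool, ∑ j, σ s i * σ s j * B (Kt i) (Kt j))
        = 2 ^ n * B (Kt i) (Kt i) := by
      intro i
      rw [Finset.sum_comm]
      have h2 : ∀ j : Fin n, (∑ s : Fin n → Bool, σ s i * σ s j * B (Kt i) (Kt j))
          = (if i = j then (2:ℝ)^n else 0) * B (Kt i) (Kt j) := by
        intro j
        rw [← Finset.sum_mul, sigma_sum]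
      rw [Finset.sum_congr rfl fun j _ => h2 j]
      rw [Finset.sum_eq_single i]
      · rw [if_pos rfl]
      · intro j _ hji
        rw [if_neg (Ne.symm hji), zero_mul]
      · intro h; exact absurd (Finset.mem_univ i) h
    rw [Finset.sum_congr rfl fun i _ => h1 i, ← Finset.mul_sum, hS]
    congr 1
    exact Finset.sum_congr rfl fun i _ => diag i
  -- Jensen / Cauchy–Schwarz step
  have sum_sqrt : (∑ s : Fin n → Bool, Real.sqrt (B (g s) (g s)))
      ≤ 2 ^ n * Real.sqrt S := by
    have h1 : (∑ s : Fin n → Bool, Real.sqrt (B (g s) (g s))) ^ 2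
        ≤ (2 ^ n : ℝ) * ∑ s : Fin n → Bool, (Real.sqrt (B (g s) (g s))) ^ 2 := by
      have := sq_sum_le_card_mul_sum_sq (s := (Finset.univ : Finset (Fin n → Bool)))
        (f := fun s => Real.sqrt (B (g s) (g s)))
      have hcard : ((Finset.univ : Finset (Fin n → Bool)).card : ℝ) = 2 ^ n := by
        simp [Finset.card_univ]
      rw [hcard] at this
      exact this
    have h2 : (∑ s : Fin n → Bool, (Real.sqrt (B (g s) (g s))) ^ 2) = 2 ^ n * S := by
      rw [← sum_Q]
      exact Finset.sum_congr rfl fun s _ => Real.sq_sqrt (B_nonneg _)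
    have h3 : (0:ℝ) ≤ ∑ s : Fin n → Bool, Real.sqrt (B (g s) (g s)) :=
      Finset.sum_nonneg fun s _ => Real.sqrt_nonneg _
    calc (∑ s : Fin n → Bool, Real.sqrt (B (g s) (g s)))
        = Real.sqrt ((∑ s : Fin n → Bool, Real.sqrt (B (g s) (g s))) ^ 2) :=
          (Real.sqrt_sq h3).symm
      _ ≤ Real.sqrt ((2 ^ n : ℝ) ^ 2 * S) := by
          apply Real.sqrt_le_sqrt
          rw [h2] at h1
          nlinarith
      _ = 2 ^ n * Real.sqrt S := by
          rw [Real.sqrt_mul (by positivity), Real.sqrt_sq (by positivity)]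
  -- final assembly
  have hname : (∑ s : Fin n → Bool,
      sSup {v : ℝ | ∃ f : H, ⟪f, f⟫ + μ * (fU f ⬝ᵥ L *ᵥ fU f) ≤ r ^ 2 ∧
          v = ∑ i : Fin n, (if s i then (1 : ℝ) else -1) * ev f (y i)})
      ≤ r * (2 ^ n * Real.sqrt S) := by
    calc (∑ s : Fin n → Bool,
        sSup {v : ℝ | ∃ f : H, ⟪f, f⟫ + μ * (fU f ⬝ᵥ L *ᵥ fU f) ≤ r ^ 2 ∧
            v = ∑ i : Fin n, (if s i then (1 : ℝ) else -1) * ev f (y i)})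
        ≤ ∑ s : Fin n → Bool, r * Real.sqrt (B (g s) (g s)) :=
          Finset.sum_le_sum fun s _ => step1 s
      _ = r * ∑ s : Fin n → Bool, Real.sqrt (B (g s) (g s)) := by rw [Finset.mul_sum]
      _ ≤ r * (2 ^ n * Real.sqrt S) := by
          exact mul_le_mul_of_nonneg_left sum_sqrt hr.le
  have hn' : (0:ℝ) < n := by exact_mod_cast hn
  have h2n : (0:ℝ) < 2 ^ n := by positivity
  calc (1 / n : ℝ) * ((1 / 2 ^ n : ℝ) * ∑ s : Fin n → Bool,
        sSup {v : ℝ | ∃ f : H, ⟪f, f⟫ + μ * (fU f ⬝ᵥ L *ᵥ fU f) ≤ r ^ 2 ∧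
          v = ∑ i : Fin n, (if s i then (1 : ℝ) else -1) * ev f (y i)})
      ≤ (1 / n : ℝ) * ((1 / 2 ^ n : ℝ) * (r * (2 ^ n * Real.sqrt S))) := by
        apply mul_le_mul_of_nonneg_left _ (by positivity)
        exact mul_le_mul_of_nonneg_left hname (by positivity)
    _ = (r / n) * Real.sqrt S := by
        field_simp
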